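/- Type A₂ canonical divisor coefficients: work in ℚ² with coordinates taken with respect to the simple roots α₁, α₂ of the root system A₂, so that the simple reflections act by s₁(x, y) = (y − x, y) and s₂(x, y) = (x, x − y), the half-sum of positive roots is ρ = (1, 1), and the pairings with the simple coroots are ⟨(x, y), α₁^∨⟩ = 2x − y and ⟨(x, y), α₁^∨ + α₂^∨⟩ = x + y. Let q ∈ ℚ. Then there is a unique μ = (x, y) ∈ ℚ² with q·s₂(s₁(μ)) − μ = (1 − q)·ρ, and it satisfies (2x − y) − 1 = (q² − 2q − 2)/(q² + q + 1) and (x + y) − 1 = −3/(q² + q + 1). Moreover, for an integer q ≥ 2, both of these quantities are ≤ 0 if and only if q = 2. -/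

import Mathlib

namespace Stmt13

/-- The simple reflection `s₁` of type `A₂` in coordinates w.r.t. the simple roots. -/
def s₁ (v : ℚ × ℚ) : ℚ × ℚ := (v.2 - v.1, v.2)

/-- The simple reflection `s₂` of type `A₂` in coordinates w.r.t. the simple roots. -/
def s₂ (v : ℚ × ℚ) : ℚ × ℚ := (v.1, v.1 - v.2)

/-- The half-sum of positive roots `ρ = α₁ + α₂`. -/
def ρ : ℚ × ℚ := (1, 1)

lemma eqn_iff (q : ℚ) (μ : ℚ × ℚ) :
    q • s₂ (s₁ μ) - μ = (1 - q) • ρ ↔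
      q * (μ.2 - μ.1) - μ.1 = 1 - q ∧ q * (-μ.1) - μ.2 = 1 - q := by
  simp only [s₁, s₂, ρ, Prod.ext_iff, Prod.smul_mk, smul_eq_mul, Prod.fst_sub,
    Prod.snd_sub, Prod.fst, Prod.snd]
  constructor <;> rintro ⟨h1, h2⟩ <;>
    exact ⟨by linear_combination h1, by linear_combination h2⟩

lemma D_pos (q : ℚ) : 0 < q ^ 2 + q + 1 := by nlinarith [sq_nonneg (q + 1/2)]

/-- Type `A₂` canonical divisor coefficients: for every `q` there is a unique `μ` with
`q·s₂(s₁(μ)) − μ = (1 − q)·ρ`; it satisfies `⟨μ, α₁^∨⟩ − 1 = (q² − 2q − 2)/(q² + q + 1)` and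
`⟨μ, α₁^∨ + α₂^∨⟩ − 1 = −3/(q² + q + 1)`; and for an integer `q ≥ 2` both quantities are
`≤ 0` iff `q = 2`. -/
theorem stmt13 :
    (∀ q : ℚ,
      (∃! μ : ℚ × ℚ, q • s₂ (s₁ μ) - μ = (1 - q) • ρ) ∧
      ∀ μ : ℚ × ℚ, q • s₂ (s₁ μ) - μ = (1 - q) • ρ →
        (2 * μ.1 - μ.2) - 1 = (q ^ 2 - 2 * q - 2) / (q ^ 2 + q + 1) ∧
        (μ.1 + μ.2) - 1 = -3 / (q ^ 2 + q + 1)) ∧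
    (∀ q : ℤ, 2 ≤ q →
      ((((q : ℚ) ^ 2 - 2 * q - 2) / ((q : ℚ) ^ 2 + q + 1) ≤ 0 ∧
        (-3 : ℚ) / ((q : ℚ) ^ 2 + q + 1) ≤ 0) ↔ q = 2)) := by
  constructor
  · intro q
    have hD : q ^ 2 + q + 1 ≠ 0 := ne_of_gt (D_pos q)
    have key : ∀ μ : ℚ × ℚ, q • s₂ (s₁ μ) - μ = (1 - q) • ρ →
        μ.1 = (q ^ 2 - 1) / (q ^ 2 + q + 1) ∧ μ.2 = (q - 1) / (q ^ 2 + q + 1) := by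
      intro μ hμ
      rw [eqn_iff] at hμ
      obtain ⟨h1, h2⟩ := hμ
      constructor
      · rw [eq_div_iff hD]
        linear_combination (-1 : ℚ) * h1 - q * h2
      · rw [eq_div_iff hD]
        linear_combination q * h1 - (q + 1) * h2
    constructor
    · refine ⟨((q ^ 2 - 1) / (q ^ 2 + q + 1), (q - 1) / (q ^ 2 + q + 1)), ?_, ?_⟩
      · simp only [eqn_iff]
        constructor <;> linear_combination (1 - q) * (mul_inv_cancel₀ hD)
      · intro μ hμ
        obtain ⟨h1, h2⟩ := key μ hμ
        exact Prod.ext h1 h2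
    · intro μ hμ
      obtain ⟨h1, h2⟩ := key μ hμ
      rw [h1, h2]
      constructor <;> linear_combination mul_inv_cancel₀ hD
  · intro q hq
    have hq' : (2 : ℚ) ≤ (q : ℚ) := by exact_mod_cast hq
    have hD : (0 : ℚ) < (q : ℚ) ^ 2 + q + 1 := D_pos _
    constructor
    · rintro ⟨h1, -⟩
      have hnum : (q : ℚ) ^ 2 - 2 * q - 2 ≤ 0 := by
        by_contra h
        push_neg at h
        have := div_pos h hD
        linarith
      have : q ≤ 2 := by
        by_contra h
        have h3 : (3 : ℚ) ≤ (q : ℚ) := by exact_mod_cast (by omega : (3 : ℤ) ≤ q)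
        nlinarith
      omega
    · rintro rfl
      norm_num
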